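/- For the Paley Hadamard basis H of size 2^r and Haar scaling matrix W⁰ of size 2^r, the local coherence of row j of H^* W⁰ restricted to level ℓ columns is μ_j(H^* W⁰ P_{𝒯_ℓ}^T) = 2^{−(ℓ−1)/2} if ⌊log₂(j−1)⌋ ≤ ℓ−2, and 0 otherwise. -/

import Mathlib

/-- Paley-ordered Hadamard basis `H_{2^r}`, given entrywise:
`Had r i j` is the `(i,j)` entry (0-based) of the `2^r × 2^r` matrix defined by
`H_1 = [1]`, `H_{2N} = (1/√2)[H_N ⊗ (1,1)ᵀ, H_N ⊗ (1,-1)ᵀ]`. -/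
noncomputable def Had : ℕ → ℕ → ℕ → ℝ
  | 0, _, _ => 1
  | r + 1, i, j =>
    if j < 2 ^ r then (Real.sqrt 2)⁻¹ * Had r (i / 2) j
    else (if i % 2 = 0 then (1 : ℝ) else -1) * ((Real.sqrt 2)⁻¹ * Had r (i / 2) (j - 2 ^ r))

/-- 1D discrete Haar wavelet basis `W_{2^r}`, entrywise:
`W_1 = [1]`, `W_{2N} = (1/√2)[W_N ⊗ (1,1)ᵀ, I_N ⊗ (1,-1)ᵀ]`. -/
noncomputable def HaarW : ℕ → ℕ → ℕ → ℝ
  | 0, _, _ => 1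
  | r + 1, i, j =>
    if j < 2 ^ r then (Real.sqrt 2)⁻¹ * HaarW r (i / 2) j
    else (Real.sqrt 2)⁻¹ * (if i / 2 = j - 2 ^ r then (if i % 2 = 0 then (1 : ℝ) else -1) else 0)

/-- Haar scaling matrix `W⁰_{2^r}`, entrywise:
`W⁰_1 = [1]`, `W⁰_{2N} = (1/√2)[W⁰_N ⊗ (1,1)ᵀ, I_N ⊗ (1,1)ᵀ]`. -/
noncomputable def HaarW0 : ℕ → ℕ → ℕ → ℝ
  | 0, _, _ => 1
  | r + 1, i, j =>
    if j < 2 ^ r then (Real.sqrt 2)⁻¹ * HaarW0 r (i / 2) j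
    else (Real.sqrt 2)⁻¹ * (if i / 2 = j - 2 ^ r then (1 : ℝ) else 0)

private lemma abs_Had (r m j : ℕ) : |Had r m j| = (Real.sqrt 2)⁻¹ ^ r := by
  induction r generalizing m j with
  | zero => simp [Had]
  | succ r ih =>
    have h2 : (0:ℝ) ≤ (Real.sqrt 2)⁻¹ := by positivity
    rw [Had]
    split_ifs with h1 h2'
    · rw [abs_mul, abs_of_nonneg h2, ih, pow_succ]; ring
    · rw [one_mul, abs_mul, abs_of_nonneg h2, ih, pow_succ]; ring
    · rw [abs_mul, abs_neg, abs_one, one_mul, abs_mul, abs_of_nonneg h2, ih, pow_succ]; ring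

private lemma sum_pair (f : ℕ → ℝ) (n : ℕ) :
    ∑ m ∈ Finset.range (2 * n), f m = ∑ a ∈ Finset.range n, (f (2 * a) + f (2 * a + 1)) := by
  induction n with
  | zero => simp
  | succ n ih =>
    rw [show 2 * (n + 1) = (2 * n + 1) + 1 by ring, Finset.sum_range_succ,
      Finset.sum_range_succ, ih, Finset.sum_range_succ]
    ring

private lemma key (ℓ : ℕ) (hl : 1 ≤ ℓ) : ∀ r, ℓ ≤ r → ∀ j k, 2 ^ (ℓ - 1) ≤ k → k < 2 ^ ℓ →
    |∑ m ∈ Finset.range (2 ^ r), Had r m j * HaarW0 r m k| =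
      if j < 2 ^ (ℓ - 1) then (Real.sqrt 2)⁻¹ ^ (ℓ - 1) else 0 := by
  have hs : Real.sqrt 2 * Real.sqrt 2 = 2 := Real.mul_self_sqrt (by norm_num)
  have hne : Real.sqrt 2 ≠ 0 := by positivity
  intro r hr
  induction r, hr using Nat.le_induction with
  | base =>
    intro j k hk1 hk2
    obtain ⟨t, rfl⟩ : ∃ t, ℓ = t + 1 := ⟨ℓ - 1, by omega⟩
    simp only [Nat.add_sub_cancel] at *
    have hx : ∀ a : ℕ,
        Had (t+1) (2*a) j * HaarW0 (t+1) (2*a) k + Had (t+1) (2*a+1) j * HaarW0 (t+1) (2*a+1) k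
        = if a = k - 2 ^ t then (if j < 2 ^ t then Had t a j else 0) else 0 := by
      intro a
      have d1 : 2 * a / 2 = a := by omega
      have d2 : (2 * a + 1) / 2 = a := by omega
      have m1 : 2 * a % 2 = 0 := by omega
      have m2 : (2 * a + 1) % 2 = 1 := by omega
      have hk : ¬ k < 2 ^ t := by omega
      simp only [Had, HaarW0, d1, d2, m1, m2, hk, if_false, if_true]
      split_ifs <;> first
        | exact False.elim (by assumption)
        | (field_simp; (try nlinarith [hs, sq_nonneg (Had t a j)]); try linear_combination (-Had t a j) * hs)
    rw [show (2:ℕ) ^ (t+1) = 2 * 2 ^ t from by ring, sum_pair,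
      Finset.sum_congr rfl (fun a _ => hx a), Finset.sum_ite_eq']
    have hk' : k - 2 ^ t ∈ Finset.range (2 ^ t) := by
      simp only [Finset.mem_range]
      have : (2:ℕ) ^ (t+1) = 2 * 2 ^ t := by ring
      omega
    rw [if_pos hk']
    split_ifs
    · exact abs_Had _ _ _
    · exact abs_zero
  | succ r hr ih =>
    intro j k hk1 hk2
    have hkr : k < 2 ^ r := lt_of_lt_of_le hk2 (Nat.pow_le_pow_right (by norm_num) hr)
    have hx : ∀ a : ℕ,
        Had (r+1) (2*a) j * HaarW0 (r+1) (2*a) k + Had (r+1) (2*a+1) j * HaarW0 (r+1) (2*a+1) k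
        = if j < 2 ^ r then Had r a j * HaarW0 r a k else 0 := by
      intro a
      have d1 : 2 * a / 2 = a := by omega
      have d2 : (2 * a + 1) / 2 = a := by omega
      have m1 : 2 * a % 2 = 0 := by omega
      have m2 : (2 * a + 1) % 2 = 1 := by omega
      simp only [Had, HaarW0, d1, d2, m1, m2, hkr, if_true]
      split_ifs <;> first
        | exact False.elim (by assumption)
        | (field_simp; (try nlinarith [hs, sq_nonneg (Had r a j * HaarW0 r a k)]); try linear_combination (-(Had r a j * HaarW0 r a k)) * hs)
    rw [show (2:ℕ) ^ (r+1) = 2 * 2 ^ r from by ring, sum_pair,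
      Finset.sum_congr rfl (fun a _ => hx a)]
    by_cases hj : j < 2 ^ r
    · simp only [hj, if_true]
      exact ih j k hk1 hk2
    · simp only [hj, if_false, Finset.sum_const_zero, abs_zero]
      rw [if_neg]
      have : (2:ℕ) ^ (ℓ - 1) ≤ 2 ^ r := Nat.pow_le_pow_right (by norm_num) (by omega)
      omega

/-- Local coherence of row `j` (1-based) of `H_{2^r}^* W⁰_{2^r}` restricted to the columns
of the `ℓ`-th dyadic level: it equals `2^{-(ℓ-1)/2}` if `⌊log₂(j-1)⌋ ≤ ℓ - 2` (with the
convention `⌊log₂ 0⌋ = -∞`, i.e. `j = 1` is always included) and `0` otherwise. -/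
theorem stmt_6 (r ℓ j : ℕ) (hl1 : 1 ≤ ℓ) (hlr : ℓ ≤ r) (hj1 : 1 ≤ j) (hjN : j ≤ 2 ^ r) :
    (Finset.Ico (2 ^ (ℓ - 1)) (2 ^ ℓ)).sup'
      (Finset.nonempty_Ico.mpr (Nat.pow_lt_pow_right one_lt_two (by omega)))
      (fun k => |∑ m ∈ Finset.range (2 ^ r), Had r m (j - 1) * HaarW0 r m k|) =
    if j = 1 ∨ (2 ≤ j ∧ (Nat.log 2 (j - 1) : ℤ) ≤ (ℓ : ℤ) - 2) then
      (Real.sqrt 2 ^ (ℓ - 1))⁻¹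
    else 0 := by
  have hiff : (j - 1 < 2 ^ (ℓ - 1)) ↔
      (j = 1 ∨ (2 ≤ j ∧ (Nat.log 2 (j - 1) : ℤ) ≤ (ℓ : ℤ) - 2)) := by
    constructor
    · intro h
      by_cases hj : j = 1
      · exact Or.inl hj
      · refine Or.inr ⟨by omega, ?_⟩
        have hne : j - 1 ≠ 0 := by omega
        have := (Nat.log_lt_iff_lt_pow one_lt_two hne).symm.mp h
        omega
    · rintro (rfl | ⟨hj2, hlog⟩)
      · simp only [Nat.sub_self]
        positivity
      · have hne : j - 1 ≠ 0 := by omega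
        exact (Nat.log_lt_iff_lt_pow one_lt_two hne).symm.mpr (by omega)
  have hconst : ∀ k ∈ Finset.Ico (2 ^ (ℓ - 1)) (2 ^ ℓ),
      |∑ m ∈ Finset.range (2 ^ r), Had r m (j - 1) * HaarW0 r m k| =
        if j - 1 < 2 ^ (ℓ - 1) then (Real.sqrt 2)⁻¹ ^ (ℓ - 1) else 0 := fun k hk =>
    key ℓ hl1 r hlr (j - 1) k (Finset.mem_Ico.mp hk).1 (Finset.mem_Ico.mp hk).2
  rw [Finset.sup'_congr _ rfl hconst, Finset.sup'_const, ← inv_pow]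
  exact if_congr hiff rfl rfl
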